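/- Let G be a profinite group in which every involution is self-centralizing, and let N be an open normal subgroup such that no involution of G lies in N. Then there exists an open normal subgroup N' ≤ N such that for every involution δ of G, every element σ ∈ G with σδσ⁻¹δ⁻¹ ∈ N' satisfies σN ∈ {N, δN}, i.e., the image in G/N of the centralizer of the image of δ in G/N' is {1, δN}. -/

import Mathlib

/-- Let `G` be a profinite group in which every involution is
self-centralizing, and `N` an open normal subgroup containing no involution of `G`.
Then there is an open normal subgroup `N' ≤ N` such that for every involution `δ` of `G`,
the image in `G/N` of the centralizer of the image of `δ` in `G/N'` is `{1, δN}`: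
every `σ` commuting with `δ` modulo `N'` lies in `N ∪ δN`. -/
theorem exists_open_normal_killing_centralizers (G : Type*) [Group G]
    [TopologicalSpace G] [IsTopologicalGroup G] [CompactSpace G] [T2Space G]
    [TotallyDisconnectedSpace G]
    (hself : ∀ δ : G, δ ^ 2 = 1 → δ ≠ 1 → ∀ σ : G, σ * δ = δ * σ → σ = 1 ∨ σ = δ)
    (N : Subgroup G) (hNnormal : N.Normal) (hNopen : IsOpen (N : Set G))
    (hNinv : ∀ δ : G, δ ^ 2 = 1 → δ ≠ 1 → δ ∉ N) :
    ∃ N' : Subgroup G, N'.Normal ∧ IsOpen ((N' : Set G)) ∧ N' ≤ N ∧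
      ∀ δ : G, δ ^ 2 = 1 → δ ≠ 1 →
        ∀ σ : G, σ * δ * σ⁻¹ * δ⁻¹ ∈ N' → (σ ∈ N ∨ δ⁻¹ * σ ∈ N) := by
  by_contra hcon
  push_neg at hcon
  -- the "bad set" for an open normal subgroup H
  set K : OpenNormalSubgroup G → Set (G × G) := fun H =>
    {p : G × G | p.1 ^ 2 = 1 ∧ p.1 ∉ N ∧
      p.2 * p.1 * p.2⁻¹ * p.1⁻¹ ∈ (H : Subgroup G) ∧ p.2 ∉ N ∧ p.1⁻¹ * p.2 ∉ N}
    with hKdef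
  have hclosed : ∀ H, IsClosed (K H) := by
    intro H
    have h1 : IsClosed {p : G × G | p.1 ^ 2 = 1} :=
      isClosed_singleton.preimage (by fun_prop : Continuous fun p : G × G => p.1 ^ 2)
    have h2 : IsClosed {p : G × G | p.1 ∉ N} :=
      (hNopen.isClosed_compl).preimage (by fun_prop : Continuous fun p : G × G => p.1)
    have h3 : IsClosed {p : G × G | p.2 * p.1 * p.2⁻¹ * p.1⁻¹ ∈ (H : Subgroup G)} :=
      H.toOpenSubgroup.isClosed.preimage
        (by fun_prop : Continuous fun p : G × G => p.2 * p.1 * p.2⁻¹ * p.1⁻¹)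
    have h4 : IsClosed {p : G × G | p.2 ∉ N} :=
      (hNopen.isClosed_compl).preimage (by fun_prop : Continuous fun p : G × G => p.2)
    have h5 : IsClosed {p : G × G | p.1⁻¹ * p.2 ∉ N} :=
      (hNopen.isClosed_compl).preimage (by fun_prop : Continuous fun p : G × G => p.1⁻¹ * p.2)
    have : K H = {p : G × G | p.1 ^ 2 = 1} ∩ ({p : G × G | p.1 ∉ N} ∩
        ({p : G × G | p.2 * p.1 * p.2⁻¹ * p.1⁻¹ ∈ (H : Subgroup G)} ∩
        ({p : G × G | p.2 ∉ N} ∩ {p : G × G | p.1⁻¹ * p.2 ∉ N}))) := by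
      ext p; simp [hKdef, and_assoc]
    rw [this]
    exact h1.inter (h2.inter (h3.inter (h4.inter h5)))
  have hnonempty : ∀ H, (K H).Nonempty := by
    intro H
    obtain ⟨δ, hδ2, hδ1, σ, hσc, hσN, hσδN⟩ :=
      hcon ((H : Subgroup G) ⊓ N)
        (by haveI := hNnormal; haveI := H.isNormal'; infer_instance)
        (H.isOpen'.inter hNopen) inf_le_right
    exact ⟨(δ, σ), hδ2, hNinv δ hδ2 hδ1, hσc.1, hσN, hσδN⟩
  have hdir : Directed (· ⊇ ·) K := by
    intro H H'
    refine ⟨H ⊓ H', ?_, ?_⟩ <;>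
    · rintro ⟨δ, σ⟩ ⟨a, b, c, d, e⟩
      exact ⟨a, b, by first | exact c.1 | exact c.2, d, e⟩
  have : Nonempty (OpenNormalSubgroup G) :=
    ⟨{ toOpenSubgroup := ⊤, isNormal' := ⟨fun _ _ g => Subgroup.mem_top _⟩ }⟩
  obtain ⟨⟨δ, σ⟩, hmem⟩ :=
    IsCompact.nonempty_iInter_of_directed_nonempty_isCompact_isClosed K hdir hnonempty
      (fun H => (hclosed H).isCompact) hclosed
  simp only [Set.mem_iInter] at hmem
  obtain ⟨hδ2, hδN, -, hσN, hσδN⟩ := hmem (Classical.arbitrary _)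
  -- the commutator lies in every open normal subgroup, hence is 1
  have hc1 : σ * δ * σ⁻¹ * δ⁻¹ = 1 := by
    by_contra hne
    obtain ⟨W, hWclopen, hW1, hWsub⟩ :=
      compact_exists_isClopen_in_isOpen (isOpen_compl_singleton (x := σ * δ * σ⁻¹ * δ⁻¹))
        (by simpa using (Ne.symm hne))
    obtain ⟨H, hH⟩ :=
      IsTopologicalGroup.exist_openNormalSubgroup_sub_clopen_nhds_of_one hWclopen hW1
    exact hWsub (hH (hmem H).2.2.1) rfl
  have hcomm : σ * δ = δ * σ := by
    have h2 : σ * δ * σ⁻¹ = δ := by simpa using mul_eq_one_iff_eq_inv.mp hc1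
    calc σ * δ = σ * δ * σ⁻¹ * σ := by group
      _ = δ * σ := by rw [h2]
  have hδ1 : δ ≠ 1 := fun h => hδN (h ▸ N.one_mem)
  rcases hself δ hδ2 hδ1 σ hcomm with h | h
  · exact hσN (h ▸ N.one_mem)
  · exact hσδN (by rw [h]; simpa using N.one_mem)
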